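/- Suppose (p*, q*, v*) ∈ S_m minimizes f^M over S_m, and suppose the relaxed constraint is nonnegative at the upper voltage bound for p*, i.e., vmax² + b·vmax + η·p*·Rs ≥ 0. Then g(p*, v*) = 0; that is, the optimal solution of the modified problem PQ-opt-m satisfies the original equality constraint of PQ-opt-o. -/
import Mathlib


/-- Feasibility half of Theorem 2: the minimizer of the penalized objective
f^M over the relaxed feasible set S_m satisfies the original equality
constraint g = 0, given the boundary hypothesis at vmax. -/
theorem stmt_10 (ξ Rs η b vmin vmax p₀ q₀ : ℝ)
    (hξ : 0 < ξ) (hRs : 0 < Rs) (hη : 0 < η) (hv : vmin ≤ vmax)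
    (K : Set (ℝ × ℝ))
    (g : ℝ → ℝ → ℝ) (hg : ∀ p v, g p v = v ^ 2 + b * v + η * p * Rs)
    (fM : ℝ → ℝ → ℝ → ℝ)
    (hfM : ∀ p q v, fM p q v = (p - p₀) ^ 2 + (q - q₀) ^ 2 - ξ * v)
    (Sm : Set (ℝ × ℝ × ℝ))
    (hSm : Sm = {x : ℝ × ℝ × ℝ |
      (x.1, x.2.1) ∈ K ∧ vmin ≤ x.2.2 ∧ x.2.2 ≤ vmax ∧ g x.1 x.2.2 ≤ 0})
    (p' q' v' : ℝ) (hmem : (p', q', v') ∈ Sm)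
    (hmin : ∀ x ∈ Sm, fM p' q' v' ≤ fM x.1 x.2.1 x.2.2)
    (hbdry : vmax ^ 2 + b * vmax + η * p' * Rs ≥ 0) :
    g p' v' = 0 := by
  subst hSm
  obtain ⟨hK, hv1, hv2, hgle⟩ := hmem
  rw [hg] at hgle ⊢
  by_contra hne
  have hlt : v' ^ 2 + b * v' + η * p' * Rs < 0 := lt_of_le_of_ne hgle hne
  -- IVT on h v = v^2 + b v + η p' Rs over [v', vmax]
  set h : ℝ → ℝ := fun v => v ^ 2 + b * v + η * p' * Rs with hh
  have hc : ContinuousOn h (Set.Icc v' vmax) := by fun_prop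
  have hv'le : v' ≤ vmax := hv2
  have : (0 : ℝ) ∈ h '' Set.Icc v' vmax := by
    apply intermediate_value_Icc hv'le hc
    constructor
    · exact le_of_lt hlt
    · exact hbdry
  obtain ⟨v0, ⟨hv0l, hv0r⟩, hv0⟩ := this
  have hmem0 : ((p', q', v0) : ℝ × ℝ × ℝ) ∈
      {x : ℝ × ℝ × ℝ | (x.1, x.2.1) ∈ K ∧ vmin ≤ x.2.2 ∧ x.2.2 ≤ vmax ∧ g x.1 x.2.2 ≤ 0} := by
    refine ⟨hK, le_trans hv1 hv0l, hv0r, ?_⟩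
    rw [hg]; exact le_of_eq hv0
  have := hmin _ hmem0
  simp only [hfM] at this
  have hv0eq : v0 = v' := by nlinarith
  rw [hv0eq] at hv0
  simp [hh] at hv0
  linarith
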